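/- Fano inequality for n i.i.d. samples: let X → (Y₁,…,Yₙ) → X̂ be a Markov chain on a finite probability space where Y₁,…,Yₙ are conditionally i.i.d. given X. Then I(X; (Y₁,…,Yₙ)) ≤ n · I(X; Y₁), and consequently, under the hypotheses of the relational Fano inequality, P(E) ≤ (n · I(X; Y₁) + h(P(E)) + log(1 - p_min)) / log((1 - p_min)/p_max). -/

import Mathlib

open Finset

open Classical in
noncomputable def pr {Ω : Type*} [Fintype Ω] (μ : Ω → ℝ) (p : Ω → Prop) : ℝ :=
  ∑ ω ∈ Finset.univ.filter p, μ ω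

def IsPMF {Ω : Type*} [Fintype Ω] (μ : Ω → ℝ) : Prop :=
  (∀ ω, 0 ≤ μ ω) ∧ ∑ ω, μ ω = 1

noncomputable def mutInfo {Ω A B : Type*} [Fintype Ω] [Fintype A] [Fintype B]
    (μ : Ω → ℝ) (X : Ω → A) (Y : Ω → B) : ℝ :=
  ∑ a : A, ∑ b : B, pr μ (fun ω => X ω = a ∧ Y ω = b) *
    Real.log (pr μ (fun ω => X ω = a ∧ Y ω = b) /
      (pr μ (fun ω => X ω = a) * pr μ (fun ω => Y ω = b)))

noncomputable def ent {Ω A : Type*} [Fintype Ω] [Fintype A] (μ : Ω → ℝ) (X : Ω → A) : ℝ :=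
  -∑ a : A, pr μ (fun ω => X ω = a) * Real.log (pr μ (fun ω => X ω = a))

noncomputable def condEnt {Ω A B : Type*} [Fintype Ω] [Fintype A] [Fintype B]
    (μ : Ω → ℝ) (X : Ω → A) (Y : Ω → B) : ℝ :=
  ent μ (fun ω => (X ω, Y ω)) - ent μ Y

noncomputable def binEnt (p : ℝ) : ℝ :=
  -(p * Real.log p) - (1 - p) * Real.log (1 - p)

/-- `X → Y → Z` is a Markov chain: `X` and `Z` are conditionally independent given `Y`. -/
def MarkovChain {Ω A B C : Type*} [Fintype Ω]
    (μ : Ω → ℝ) (X : Ω → A) (Y : Ω → B) (Z : Ω → C) : Prop :=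
  ∀ (a : A) (b : B) (c : C),
    pr μ (fun ω => X ω = a ∧ Y ω = b ∧ Z ω = c) * pr μ (fun ω => Y ω = b) =
      pr μ (fun ω => X ω = a ∧ Y ω = b) * pr μ (fun ω => Y ω = b ∧ Z ω = c)

section Base
open Classical
variable {Ω : Type*} [Fintype Ω] (μ : Ω → ℝ)

lemma pr_eq_sum_ite (p : Ω → Prop) : pr μ p = ∑ ω, if p ω then μ ω else 0 := by
  rw [pr, Finset.sum_filter]

lemma pr_nonneg (hμ : ∀ ω, 0 ≤ μ ω) (p : Ω → Prop) : 0 ≤ pr μ p := by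
  rw [pr_eq_sum_ite]
  exact Finset.sum_nonneg fun ω _ => by by_cases h : p ω <;> simp [h, hμ ω]

lemma pr_congr {p q : Ω → Prop} (h : ∀ ω, p ω ↔ q ω) : pr μ p = pr μ q := by
  simp only [pr_eq_sum_ite]
  exact Finset.sum_congr rfl fun ω _ => by rw [if_congr (h ω) rfl rfl]

lemma pr_false : pr μ (fun _ => False) = 0 := by simp [pr_eq_sum_ite]

lemma pr_mono (hμ : ∀ ω, 0 ≤ μ ω) {p q : Ω → Prop} (h : ∀ ω, p ω → q ω) :
    pr μ p ≤ pr μ q := by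
  simp only [pr_eq_sum_ite]
  refine Finset.sum_le_sum fun ω _ => ?_
  by_cases hp : p ω
  · simp [hp, h ω hp]
  · by_cases hq : q ω <;> simp [hp, hq, hμ ω]

lemma pr_true (hμ1 : ∑ ω, μ ω = 1) : pr μ (fun _ => True) = 1 := by
  simp [pr_eq_sum_ite, hμ1]

lemma pr_le_one (hμ0 : ∀ ω, 0 ≤ μ ω) (hμ1 : ∑ ω, μ ω = 1) (p : Ω → Prop) : pr μ p ≤ 1 := by
  rw [← pr_true μ hμ1]; exact pr_mono μ hμ0 fun ω _ => trivial

lemma pr_sum_fiber {V : Type*} [Fintype V] (Z : Ω → V) (p : Ω → Prop) :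
    ∑ v, pr μ (fun ω => p ω ∧ Z ω = v) = pr μ p := by
  simp only [pr_eq_sum_ite]
  rw [Finset.sum_comm]
  refine Finset.sum_congr rfl fun ω _ => ?_
  by_cases hp : p ω <;> simp [hp]

lemma pr_and_comp {V : Type*} [Fintype V] (Z : Ω → V) (p : Ω → Prop) (q : V → Prop) :
    pr μ (fun ω => p ω ∧ q (Z ω)) = ∑ v, if q v then pr μ (fun ω => p ω ∧ Z ω = v) else 0 := by
  rw [← pr_sum_fiber μ Z (fun ω => p ω ∧ q (Z ω))]
  refine Finset.sum_congr rfl fun v _ => ?_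
  by_cases hq : q v
  · rw [if_pos hq]
    exact pr_congr μ fun ω =>
      ⟨fun ⟨⟨hp, _⟩, hz⟩ => ⟨hp, hz⟩, fun ⟨hp, hz⟩ => ⟨⟨hp, hz ▸ hq⟩, hz⟩⟩
  · rw [if_neg hq, ← pr_false μ]
    exact pr_congr μ fun ω =>
      ⟨fun ⟨⟨_, hqz⟩, hz⟩ => hq (hz ▸ hqz), False.elim⟩

end Base

section KL
open Real

lemma gibbs {ι : Type*} (s : Finset ι) (a b : ι → ℝ) (ha : ∀ i ∈ s, 0 ≤ a i)
    (hb : ∀ i ∈ s, 0 ≤ b i) (hab : ∀ i ∈ s, a i ≠ 0 → b i ≠ 0) :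
    ∑ i ∈ s, a i * Real.log (b i / a i) ≤ (∑ i ∈ s, b i) - ∑ i ∈ s, a i := by
  rw [← Finset.sum_sub_distrib]
  refine Finset.sum_le_sum fun i hi => ?_
  rcases eq_or_lt_of_le (ha i hi) with h0 | hpos
  · simp [← h0, hb i hi]
  · have hbpos : 0 < b i := lt_of_le_of_ne (hb i hi) (Ne.symm (hab i hi (ne_of_gt hpos)))
    calc a i * Real.log (b i / a i) ≤ a i * (b i / a i - 1) := by
          exact mul_le_mul_of_nonneg_left
            (Real.log_le_sub_one_of_pos (div_pos hbpos hpos)) (le_of_lt hpos)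
      _ = b i - a i := by field_simp
-- log-sum inequality
lemma logSum {ι : Type*} (s : Finset ι) (a b : ι → ℝ) (ha : ∀ i ∈ s, 0 ≤ a i)
    (hb : ∀ i ∈ s, 0 ≤ b i) (hab : ∀ i ∈ s, a i ≠ 0 → b i ≠ 0) :
    (∑ i ∈ s, a i) * Real.log ((∑ i ∈ s, a i) / (∑ i ∈ s, b i)) ≤
      ∑ i ∈ s, a i * Real.log (a i / b i) := by
  set S := ∑ i ∈ s, a i with hS
  set T := ∑ i ∈ s, b i with hT
  rcases eq_or_lt_of_le (Finset.sum_nonneg ha) with h0 | hSpos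
  · have : ∀ i ∈ s, a i = 0 := by
      intro i hi
      exact le_antisymm (by
        have := (Finset.sum_eq_zero_iff_of_nonneg ha).1 h0.symm; exact le_of_eq (this i hi))
        (ha i hi)
    rw [hS, ← h0]
    simp only [zero_mul]
    refine Finset.sum_nonneg fun i hi => by rw [this i hi]; simp
  · have hTpos : 0 < T := by
      rcases eq_or_lt_of_le (Finset.sum_nonneg hb) with h0' | h
      · exfalso
        have hb0 : ∀ i ∈ s, b i = 0 := (Finset.sum_eq_zero_iff_of_nonneg hb).1 h0'.symm
        have : ∀ i ∈ s, a i = 0 := fun i hi => by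
          by_contra hne; exact hab i hi hne (hb0 i hi)
        rw [Finset.sum_eq_zero this] at hSpos; exact lt_irrefl _ hSpos
      · exact h
    have key := gibbs s a (fun i => b i * (S / T)) ha
      (fun i hi => mul_nonneg (hb i hi) (le_of_lt (div_pos hSpos hTpos)))
      (fun i hi hne => by
        have := hab i hi hne
        positivity)
    have hsum : ∑ i ∈ s, b i * (S / T) = S := by
      rw [← Finset.sum_mul, ← hT]; field_simp
    rw [hsum, sub_self] at key
    have expand : ∀ i ∈ s, a i * Real.log (b i * (S / T) / a i) =
        a i * Real.log (b i / a i) + a i * Real.log (S / T) := by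
      intro i hi
      rcases eq_or_lt_of_le (ha i hi) with h0 | hpos
      · simp [← h0]
      · have hbpos : 0 < b i := lt_of_le_of_ne (hb i hi) (Ne.symm (hab i hi (ne_of_gt hpos)))
        rw [mul_div_right_comm, Real.log_mul (by positivity) (by positivity)]
        ring
    rw [Finset.sum_congr rfl expand, Finset.sum_add_distrib, ← Finset.sum_mul, ← hS] at key
    have flip : ∀ i ∈ s, a i * Real.log (a i / b i) = -(a i * Real.log (b i / a i)) := by
      intro i _
      rw [← inv_div, Real.log_inv]; ring
    rw [Finset.sum_congr rfl flip, Finset.sum_neg_distrib]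
    linarith
end KL
section MI
set_option linter.unusedSectionVars false
open Classical
variable {Ω A B C : Type*} [Fintype Ω] [Fintype A] [Fintype B] [Fintype C] (μ : Ω → ℝ)

lemma pr_comp' {V : Type*} [Fintype V] (Z : Ω → V) (q : V → Prop) :
    pr μ (fun ω => q (Z ω)) = ∑ v, if q v then pr μ (fun ω => Z ω = v) else 0 := by
  have h := pr_and_comp μ Z (fun _ => True) q
  simp only [true_and] at h
  exact h

lemma marg_right (X : Ω → A) (Y : Ω → B) (a : A) :
    ∑ b, pr μ (fun ω => X ω = a ∧ Y ω = b) = pr μ (fun ω => X ω = a) :=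
  pr_sum_fiber μ Y _

lemma marg_left (X : Ω → A) (Y : Ω → B) (b : B) :
    ∑ a, pr μ (fun ω => X ω = a ∧ Y ω = b) = pr μ (fun ω => Y ω = b) := by
  rw [← pr_sum_fiber μ X (fun ω => Y ω = b)]
  exact Finset.sum_congr rfl fun a _ => pr_congr μ fun ω => and_comm

lemma total_one (hμ1 : ∑ ω, μ ω = 1) (X : Ω → A) :
    ∑ a, pr μ (fun ω => X ω = a) = 1 := by
  rw [← pr_true μ hμ1, ← pr_sum_fiber μ X (fun _ => True)]
  exact Finset.sum_congr rfl fun a _ => pr_congr μ fun ω => by simp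

lemma joint_pos (hμ0 : ∀ ω, 0 ≤ μ ω) (X : Ω → A) (Y : Ω → B) {a : A} {b : B}
    (h : pr μ (fun ω => X ω = a ∧ Y ω = b) ≠ 0) :
    0 < pr μ (fun ω => X ω = a) ∧ 0 < pr μ (fun ω => Y ω = b) := by
  have hj : 0 < pr μ (fun ω => X ω = a ∧ Y ω = b) :=
    lt_of_le_of_ne (pr_nonneg μ hμ0 _) (Ne.symm h)
  exact ⟨lt_of_lt_of_le hj (pr_mono μ hμ0 fun ω hw => hw.1),
    lt_of_lt_of_le hj (pr_mono μ hμ0 fun ω hw => hw.2)⟩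

lemma joint_ne_zero (hμ0 : ∀ ω, 0 ≤ μ ω) (X : Ω → A) (Y : Ω → B) {a : A} {b : B}
    (h : pr μ (fun ω => X ω = a ∧ Y ω = b) ≠ 0) :
    pr μ (fun ω => X ω = a) * pr μ (fun ω => Y ω = b) ≠ 0 := by
  obtain ⟨h1, h2⟩ := joint_pos μ hμ0 X Y h
  positivity

lemma mutInfo_nonneg (hμ : IsPMF μ) (X : Ω → A) (Y : Ω → B) : 0 ≤ mutInfo μ X Y := by
  obtain ⟨hμ0, hμ1⟩ := hμ
  rw [mutInfo]
  have key := logSum (Finset.univ : Finset (A × B))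
    (fun p => pr μ (fun ω => X ω = p.1 ∧ Y ω = p.2))
    (fun p => pr μ (fun ω => X ω = p.1) * pr μ (fun ω => Y ω = p.2))
    (fun p _ => pr_nonneg μ hμ0 _)
    (fun p _ => mul_nonneg (pr_nonneg μ hμ0 _) (pr_nonneg μ hμ0 _))
    (fun p _ h => joint_ne_zero μ hμ0 X Y h)
  have hA : ∑ p : A × B, pr μ (fun ω => X ω = p.1 ∧ Y ω = p.2) = 1 := by
    rw [Fintype.sum_prod_type]
    rw [Finset.sum_congr rfl fun a (_ : a ∈ Finset.univ) => marg_right μ X Y a]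
    exact total_one μ hμ1 X
  have hB : ∑ p : A × B, pr μ (fun ω => X ω = p.1) * pr μ (fun ω => Y ω = p.2) = 1 := by
    rw [Fintype.sum_prod_type]
    rw [Finset.sum_congr rfl fun a (_ : a ∈ Finset.univ) =>
      (Finset.mul_sum Finset.univ (fun b => pr μ (fun ω => Y ω = b)) (pr μ (fun ω => X ω = a))).symm]
    rw [total_one μ hμ1 Y]
    simpa using total_one μ hμ1 X
  rw [hA, hB] at key
  refine le_trans (by simpa using key) (le_of_eq (Fintype.sum_prod_type _))

lemma mutInfo_comp_le (hμ0 : ∀ ω, 0 ≤ μ ω) (X : Ω → A) (W : Ω → B) (g : B → C) :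
    mutInfo μ X (fun ω => g (W ω)) ≤ mutInfo μ X W := by
  rw [mutInfo, mutInfo]
  refine Finset.sum_le_sum fun a _ => ?_
  rw [← Finset.sum_fiberwise Finset.univ g (fun b => pr μ (fun ω => X ω = a ∧ W ω = b) *
    Real.log (pr μ (fun ω => X ω = a ∧ W ω = b) /
      (pr μ (fun ω => X ω = a) * pr μ (fun ω => W ω = b))))]
  refine Finset.sum_le_sum fun c _ => ?_
  have e1 : pr μ (fun ω => X ω = a ∧ g (W ω) = c) =
      ∑ b ∈ Finset.univ.filter (fun b => g b = c), pr μ (fun ω => X ω = a ∧ W ω = b) := by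
    rw [pr_and_comp μ W (fun ω => X ω = a) (fun b => g b = c), ← Finset.sum_filter]
  have e2 : pr μ (fun ω => g (W ω) = c) =
      ∑ b ∈ Finset.univ.filter (fun b => g b = c), pr μ (fun ω => W ω = b) := by
    rw [pr_comp' μ W (fun b => g b = c), ← Finset.sum_filter]
  rw [e1, e2, Finset.mul_sum]
  exact logSum _ _ _ (fun b _ => pr_nonneg μ hμ0 _)
    (fun b _ => mul_nonneg (pr_nonneg μ hμ0 _) (pr_nonneg μ hμ0 _))
    (fun b _ h => joint_ne_zero μ hμ0 X W h)

lemma mutInfo_markov (hμ0 : ∀ ω, 0 ≤ μ ω) (X : Ω → A) (Y : Ω → B) (Z : Ω → C)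
    (hMC : MarkovChain μ X Y Z) : mutInfo μ X (fun ω => (Y ω, Z ω)) = mutInfo μ X Y := by
  rw [mutInfo, mutInfo]
  refine Finset.sum_congr rfl fun a _ => ?_
  rw [Fintype.sum_prod_type]
  refine Finset.sum_congr rfl fun b _ => ?_
  have h3 : ∀ c, pr μ (fun ω => X ω = a ∧ (Y ω, Z ω) = (b, c)) =
      pr μ (fun ω => X ω = a ∧ Y ω = b ∧ Z ω = c) := fun c =>
    pr_congr μ fun ω => by simp [Prod.ext_iff, and_assoc]
  have h2 : ∀ c, pr μ (fun ω => (Y ω, Z ω) = (b, c)) =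
      pr μ (fun ω => Y ω = b ∧ Z ω = c) := fun c =>
    pr_congr μ fun ω => by simp [Prod.ext_iff]
  have hsum : ∑ c, pr μ (fun ω => X ω = a ∧ Y ω = b ∧ Z ω = c) =
      pr μ (fun ω => X ω = a ∧ Y ω = b) := by
    rw [← pr_sum_fiber μ Z (fun ω => X ω = a ∧ Y ω = b)]
    exact Finset.sum_congr rfl fun c _ => pr_congr μ fun ω => by tauto
  have term : ∀ c, pr μ (fun ω => X ω = a ∧ (Y ω, Z ω) = (b, c)) *
      Real.log (pr μ (fun ω => X ω = a ∧ (Y ω, Z ω) = (b, c)) /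
        (pr μ (fun ω => X ω = a) * pr μ (fun ω => (Y ω, Z ω) = (b, c)))) =
      pr μ (fun ω => X ω = a ∧ Y ω = b ∧ Z ω = c) *
      Real.log (pr μ (fun ω => X ω = a ∧ Y ω = b) /
        (pr μ (fun ω => X ω = a) * pr μ (fun ω => Y ω = b))) := by
    intro c
    rw [h3, h2]
    by_cases hz : pr μ (fun ω => X ω = a ∧ Y ω = b ∧ Z ω = c) = 0
    · rw [hz]; ring
    · congr 1
      have hj : 0 < pr μ (fun ω => X ω = a ∧ Y ω = b ∧ Z ω = c) :=
        lt_of_le_of_ne (pr_nonneg μ hμ0 _) (Ne.symm hz)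
      have hxa : 0 < pr μ (fun ω => X ω = a) :=
        lt_of_lt_of_le hj (pr_mono μ hμ0 fun ω hw => hw.1)
      have hyb : 0 < pr μ (fun ω => Y ω = b) :=
        lt_of_lt_of_le hj (pr_mono μ hμ0 fun ω hw => hw.2.1)
      have hyz : 0 < pr μ (fun ω => Y ω = b ∧ Z ω = c) :=
        lt_of_lt_of_le hj (pr_mono μ hμ0 fun ω hw => ⟨hw.2.1, hw.2.2⟩)
      have hxy : 0 < pr μ (fun ω => X ω = a ∧ Y ω = b) :=
        lt_of_lt_of_le hj (pr_mono μ hμ0 fun ω hw => ⟨hw.1, hw.2.1⟩)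
      congr 1
      rw [div_eq_div_iff (by positivity) (by positivity)]
      have := hMC a b c
      nlinarith [this]
  rw [Finset.sum_congr rfl fun c (_ : c ∈ Finset.univ) => term c, ← Finset.sum_mul, hsum]
end MI
section Part1
set_option linter.unusedSectionVars false
open Classical

lemma part1 {Ω A B : Type*} [Fintype Ω] [Fintype A] [Fintype B]
    (n : ℕ) (hn : 0 < n) (μ : Ω → ℝ) (hμ : IsPMF μ) (X : Ω → A) (Y : Ω → (Fin n → B))
    (hindep : ∀ (a : A) (y : Fin n → B),
      pr μ (fun ω => X ω = a ∧ Y ω = y) * (pr μ (fun ω => X ω = a)) ^ (n - 1) =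
        ∏ i : Fin n, pr μ (fun ω => X ω = a ∧ Y ω i = y i)) :
    mutInfo μ X Y ≤ ∑ i : Fin n, mutInfo μ X (fun ω => Y ω i) := by
  obtain ⟨hμ0, hμ1⟩ := hμ
  have key : ∀ (a : A) (y : Fin n → B),
      pr μ (fun ω => X ω = a ∧ Y ω = y) *
        Real.log (pr μ (fun ω => X ω = a ∧ Y ω = y) /
          (pr μ (fun ω => X ω = a) * pr μ (fun ω => Y ω = y))) =
      (∑ i : Fin n, pr μ (fun ω => X ω = a ∧ Y ω = y) *
        Real.log (pr μ (fun ω => X ω = a ∧ Y ω i = y i) /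
          (pr μ (fun ω => X ω = a) * pr μ (fun ω => Y ω i = y i)))) +
      pr μ (fun ω => X ω = a ∧ Y ω = y) *
        Real.log ((∏ i : Fin n, pr μ (fun ω => Y ω i = y i)) / pr μ (fun ω => Y ω = y)) := by
    intro a y
    by_cases hz : pr μ (fun ω => X ω = a ∧ Y ω = y) = 0
    · simp [hz]
    · have hJ : 0 < pr μ (fun ω => X ω = a ∧ Y ω = y) :=
        lt_of_le_of_ne (pr_nonneg μ hμ0 _) (Ne.symm hz)
      have hpa : 0 < pr μ (fun ω => X ω = a) :=
        lt_of_lt_of_le hJ (pr_mono μ hμ0 fun ω hw => hw.1)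
      have hpY : 0 < pr μ (fun ω => Y ω = y) :=
        lt_of_lt_of_le hJ (pr_mono μ hμ0 fun ω hw => hw.2)
      have hJi : ∀ i, 0 < pr μ (fun ω => X ω = a ∧ Y ω i = y i) := fun i =>
        lt_of_lt_of_le hJ (pr_mono μ hμ0 fun ω hw => ⟨hw.1, by rw [hw.2]⟩)
      have hpi : ∀ i, 0 < pr μ (fun ω => Y ω i = y i) := fun i =>
        lt_of_lt_of_le hJ (pr_mono μ hμ0 fun ω hw => by rw [hw.2])
      rw [← Finset.mul_sum, ← mul_add]
      congr 1
      have e1 : ∀ i : Fin n, i ∈ Finset.univ → Real.log (pr μ (fun ω => X ω = a ∧ Y ω i = y i) /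
          (pr μ (fun ω => X ω = a) * pr μ (fun ω => Y ω i = y i))) =
          Real.log (pr μ (fun ω => X ω = a ∧ Y ω i = y i)) - Real.log (pr μ (fun ω => X ω = a))
            - Real.log (pr μ (fun ω => Y ω i = y i)) := fun i _ => by
        rw [Real.log_div (ne_of_gt (hJi i)) (ne_of_gt (mul_pos hpa (hpi i))),
          Real.log_mul (ne_of_gt hpa) (ne_of_gt (hpi i))]
        ring
      have e2 : ∑ i : Fin n, Real.log (pr μ (fun ω => X ω = a ∧ Y ω i = y i)) =
          Real.log (pr μ (fun ω => X ω = a ∧ Y ω = y)) +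
            ((n : ℝ) - 1) * Real.log (pr μ (fun ω => X ω = a)) := by
        rw [← Real.log_prod (fun i _ => ne_of_gt (hJi i)), ← hindep a y,
          Real.log_mul hz (pow_ne_zero _ (ne_of_gt hpa)), Real.log_pow, Nat.cast_pred hn]
      have e3 : Real.log ((∏ i : Fin n, pr μ (fun ω => Y ω i = y i)) /
            pr μ (fun ω => Y ω = y)) =
          (∑ i : Fin n, Real.log (pr μ (fun ω => Y ω i = y i))) -
            Real.log (pr μ (fun ω => Y ω = y)) := by
        rw [Real.log_div (ne_of_gt (Finset.prod_pos fun i _ => hpi i)) (ne_of_gt hpY),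
          Real.log_prod (fun i _ => ne_of_gt (hpi i))]
      have e0 : Real.log (pr μ (fun ω => X ω = a ∧ Y ω = y) /
            (pr μ (fun ω => X ω = a) * pr μ (fun ω => Y ω = y))) =
          Real.log (pr μ (fun ω => X ω = a ∧ Y ω = y)) - Real.log (pr μ (fun ω => X ω = a))
            - Real.log (pr μ (fun ω => Y ω = y)) := by
        rw [Real.log_div hz (ne_of_gt (mul_pos hpa hpY)), Real.log_mul (ne_of_gt hpa) (ne_of_gt hpY)]
        ring
      rw [e0, Finset.sum_congr rfl e1, Finset.sum_sub_distrib, Finset.sum_sub_distrib, e2, e3,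
        Finset.sum_const, Finset.card_univ, Fintype.card_fin, nsmul_eq_mul]
      ring
  have group : ∀ (i : Fin n) (a : A),
      (∑ y : Fin n → B, pr μ (fun ω => X ω = a ∧ Y ω = y) *
        Real.log (pr μ (fun ω => X ω = a ∧ Y ω i = y i) /
          (pr μ (fun ω => X ω = a) * pr μ (fun ω => Y ω i = y i)))) =
      ∑ b : B, pr μ (fun ω => X ω = a ∧ Y ω i = b) *
        Real.log (pr μ (fun ω => X ω = a ∧ Y ω i = b) /
          (pr μ (fun ω => X ω = a) * pr μ (fun ω => Y ω i = b))) := by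
    intro i a
    rw [← Finset.sum_fiberwise Finset.univ (fun y : Fin n → B => y i)
      (fun y => pr μ (fun ω => X ω = a ∧ Y ω = y) *
        Real.log (pr μ (fun ω => X ω = a ∧ Y ω i = y i) /
          (pr μ (fun ω => X ω = a) * pr μ (fun ω => Y ω i = y i))))]
    refine Finset.sum_congr rfl fun b _ => ?_
    have hco : ∀ y ∈ Finset.univ.filter (fun y : Fin n → B => y i = b),
        pr μ (fun ω => X ω = a ∧ Y ω = y) *
          Real.log (pr μ (fun ω => X ω = a ∧ Y ω i = y i) /
            (pr μ (fun ω => X ω = a) * pr μ (fun ω => Y ω i = y i))) =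
        pr μ (fun ω => X ω = a ∧ Y ω = y) *
          Real.log (pr μ (fun ω => X ω = a ∧ Y ω i = b) /
            (pr μ (fun ω => X ω = a) * pr μ (fun ω => Y ω i = b))) := fun y hy => by
      rw [(Finset.mem_filter.1 hy).2]
    rw [Finset.sum_congr rfl hco, ← Finset.sum_mul]
    congr 1
    rw [pr_and_comp μ Y (fun ω => X ω = a) (fun y => y i = b), ← Finset.sum_filter]
  -- tail bound
  have tail : (∑ y : Fin n → B, pr μ (fun ω => Y ω = y) *
      Real.log ((∏ i : Fin n, pr μ (fun ω => Y ω i = y i)) / pr μ (fun ω => Y ω = y))) ≤ 0 := by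
    have hg := gibbs (Finset.univ : Finset (Fin n → B))
      (fun y => pr μ (fun ω => Y ω = y))
      (fun y => ∏ i : Fin n, pr μ (fun ω => Y ω i = y i))
      (fun y _ => pr_nonneg μ hμ0 _)
      (fun y _ => Finset.prod_nonneg fun i _ => pr_nonneg μ hμ0 _)
      (fun y _ hne => by
        have hpY : 0 < pr μ (fun ω => Y ω = y) := lt_of_le_of_ne (pr_nonneg μ hμ0 _) (Ne.symm hne)
        have : ∀ i : Fin n, 0 < pr μ (fun ω => Y ω i = y i) := fun i =>
          lt_of_lt_of_le hpY (pr_mono μ hμ0 fun ω hw => by rw [hw])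
        exact ne_of_gt (Finset.prod_pos fun i _ => this i))
    have hsum1 : ∑ y : Fin n → B, pr μ (fun ω => Y ω = y) = 1 := total_one μ hμ1 Y
    have hsum2 : ∑ y : Fin n → B, ∏ i : Fin n, pr μ (fun ω => Y ω i = y i) = 1 := by
      rw [← Fintype.piFinset_univ, ← Finset.prod_univ_sum (fun _ : Fin n => (Finset.univ : Finset B)) (fun i b => pr μ (fun ω => Y ω i = b))]
      rw [Finset.prod_congr rfl fun i (_ : i ∈ Finset.univ) => total_one μ hμ1 (fun ω => Y ω i)]
      simp
    rw [hsum1, hsum2] at hg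
    simpa using hg
  rw [mutInfo]
  rw [Finset.sum_congr rfl fun a (_ : a ∈ Finset.univ) =>
    Finset.sum_congr rfl fun y (_ : y ∈ Finset.univ) => key a y]
  simp only [Finset.sum_add_distrib]
  have swap1 : (∑ a : A, ∑ y : Fin n → B, ∑ i : Fin n,
      pr μ (fun ω => X ω = a ∧ Y ω = y) *
        Real.log (pr μ (fun ω => X ω = a ∧ Y ω i = y i) /
          (pr μ (fun ω => X ω = a) * pr μ (fun ω => Y ω i = y i)))) =
      ∑ i : Fin n, mutInfo μ X (fun ω => Y ω i) := by
    rw [Finset.sum_congr rfl fun a (_ : a ∈ Finset.univ) => Finset.sum_comm]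
    rw [Finset.sum_comm]
    refine Finset.sum_congr rfl fun i _ => ?_
    rw [mutInfo]
    exact Finset.sum_congr rfl fun a _ => group i a
  have tail2 : (∑ a : A, ∑ y : Fin n → B,
      pr μ (fun ω => X ω = a ∧ Y ω = y) *
        Real.log ((∏ i : Fin n, pr μ (fun ω => Y ω i = y i)) / pr μ (fun ω => Y ω = y))) ≤ 0 := by
    rw [Finset.sum_comm]
    calc (∑ y : Fin n → B, ∑ a : A,
        pr μ (fun ω => X ω = a ∧ Y ω = y) *
          Real.log ((∏ i : Fin n, pr μ (fun ω => Y ω i = y i)) / pr μ (fun ω => Y ω = y)))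
        = ∑ y : Fin n → B, pr μ (fun ω => Y ω = y) *
            Real.log ((∏ i : Fin n, pr μ (fun ω => Y ω i = y i)) / pr μ (fun ω => Y ω = y)) := by
          refine Finset.sum_congr rfl fun y _ => ?_
          rw [← Finset.sum_mul, marg_left μ X Y y]
      _ ≤ 0 := tail
  linarith [swap1, tail2]
end Part1
section Fano
set_option linter.unusedSectionVars false
open Classical

lemma total_pair {Ω A C : Type*} [Fintype Ω] [Fintype A] [Fintype C]
    (μ : Ω → ℝ) (hμ1 : ∑ ω, μ ω = 1) (X : Ω → A) (Xh : Ω → C) :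
    ∑ p : A × C, pr μ (fun ω => X ω = p.1 ∧ Xh ω = p.2) = 1 := by
  rw [Fintype.sum_prod_type]
  rw [Finset.sum_congr rfl fun a (_ : a ∈ Finset.univ) => marg_right μ X Xh a]
  exact total_one μ hμ1 X

lemma total_pair_indep {Ω A C : Type*} [Fintype Ω] [Fintype A] [Fintype C]
    (μ : Ω → ℝ) (hμ1 : ∑ ω, μ ω = 1) (X : Ω → A) (Xh : Ω → C) :
    ∑ p : A × C, pr μ (fun ω => X ω = p.1) * pr μ (fun ω => Xh ω = p.2) = 1 := by
  rw [Fintype.sum_prod_type]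
  rw [Finset.sum_congr rfl fun a (_ : a ∈ Finset.univ) =>
    (Finset.mul_sum Finset.univ (fun c => pr μ (fun ω => Xh ω = c)) (pr μ (fun ω => X ω = a))).symm]
  rw [total_one μ hμ1 Xh]
  simpa using total_one μ hμ1 X

lemma pr_comp_filter {Ω V : Type*} [Fintype Ω] [Fintype V] (μ : Ω → ℝ) (Z : Ω → V)
    (q : V → Prop) [DecidablePred q] :
    pr μ (fun ω => q (Z ω)) = ∑ v ∈ Finset.univ.filter q, pr μ (fun ω => Z ω = v) := by
  rw [pr_comp' μ Z q, Finset.sum_filter]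
  exact Finset.sum_congr rfl fun v _ => by by_cases h : q v <;> simp [h]

lemma fano_core {Ω A C : Type*} [Fintype Ω] [Fintype A] [Fintype C]
    (μ : Ω → ℝ) (hμ : IsPMF μ) (X : Ω → A) (Xh : Ω → C) (R : Finset (A × C))
    (pmin pmax : ℝ) (hmin0 : 0 ≤ pmin) (hmax0 : 0 < pmax) (hsum : pmin + pmax < 1)
    (hmin : ∀ ω₀ : Ω, pmin ≤ pr μ (fun ω => (X ω, Xh ω₀) ∈ R))
    (hmax : ∀ ω₀ : Ω, pr μ (fun ω => (X ω, Xh ω₀) ∈ R) ≤ pmax) :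
    pr μ (fun ω => (X ω, Xh ω) ∈ R) * Real.log ((1 - pmin) / pmax) ≤
      mutInfo μ X Xh + binEnt (pr μ (fun ω => (X ω, Xh ω) ∈ R)) + Real.log (1 - pmin) := by
  obtain ⟨hμ0, hμ1⟩ := hμ
  have h1min : 0 < 1 - pmin := by linarith
  have hpmax1 : pmax < 1 := by linarith
  set P := pr μ (fun ω => (X ω, Xh ω) ∈ R) with hPdef
  set Q := ∑ p ∈ Finset.univ.filter (fun p : A × C => p ∈ R),
      pr μ (fun ω => X ω = p.1) * pr μ (fun ω => Xh ω = p.2) with hQdef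
  have hP0 : 0 ≤ P := pr_nonneg μ hμ0 _
  have hP1 : P ≤ 1 := pr_le_one μ hμ0 hμ1 _
  have hPsum : P = ∑ p ∈ Finset.univ.filter (fun p : A × C => p ∈ R),
      pr μ (fun ω => X ω = p.1 ∧ Xh ω = p.2) := by
    rw [hPdef, pr_comp_filter μ (fun ω => (X ω, Xh ω)) (fun p : A × C => p ∈ R)]
    refine Finset.sum_congr rfl fun p _ => pr_congr μ fun ω => ?_
    simp [Prod.ext_iff]
  -- Q bounds
  have hq' : ∀ c, pr μ (fun ω => (X ω, c) ∈ R) =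
      ∑ a ∈ Finset.univ.filter (fun a : A => (a, c) ∈ R), pr μ (fun ω => X ω = a) := fun c =>
    pr_comp_filter μ X (fun a : A => (a, c) ∈ R)
  have hQ : Q = ∑ c, pr μ (fun ω => Xh ω = c) * pr μ (fun ω => (X ω, c) ∈ R) := by
    rw [hQdef, Finset.sum_filter, Fintype.sum_prod_type, Finset.sum_comm]
    refine Finset.sum_congr rfl fun c _ => ?_
    rw [hq' c, Finset.mul_sum, Finset.sum_filter]
    refine Finset.sum_congr rfl fun a _ => ?_
    by_cases h : (a, c) ∈ R <;> simp [h] <;> ring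
  have hex : ∀ c, pr μ (fun ω => Xh ω = c) ≠ 0 → ∃ ω₀, Xh ω₀ = c := by
    intro c h
    by_contra hne
    push_neg at hne
    apply h
    rw [← pr_false μ]
    exact pr_congr μ fun ω => ⟨fun hh => hne ω hh, False.elim⟩
  have hQmax : Q ≤ pmax := by
    rw [hQ]
    calc ∑ c, pr μ (fun ω => Xh ω = c) * pr μ (fun ω => (X ω, c) ∈ R)
        ≤ ∑ c, pr μ (fun ω => Xh ω = c) * pmax := by
          refine Finset.sum_le_sum fun c _ => ?_
          by_cases h : pr μ (fun ω => Xh ω = c) = 0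
          · rw [h]; simp
          · obtain ⟨ω₀, hω₀⟩ := hex c h
            refine mul_le_mul_of_nonneg_left ?_ (pr_nonneg μ hμ0 _)
            have := hmax ω₀
            rwa [hω₀] at this
      _ = pmax := by rw [← Finset.sum_mul, total_one μ hμ1 Xh, one_mul]
  have hQmin : pmin ≤ Q := by
    rw [hQ]
    calc pmin = ∑ c, pr μ (fun ω => Xh ω = c) * pmin := by
          rw [← Finset.sum_mul, total_one μ hμ1 Xh, one_mul]
      _ ≤ ∑ c, pr μ (fun ω => Xh ω = c) * pr μ (fun ω => (X ω, c) ∈ R) := by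
          refine Finset.sum_le_sum fun c _ => ?_
          by_cases h : pr μ (fun ω => Xh ω = c) = 0
          · rw [h]; simp
          · obtain ⟨ω₀, hω₀⟩ := hex c h
            refine mul_le_mul_of_nonneg_left ?_ (pr_nonneg μ hμ0 _)
            have := hmin ω₀
            rwa [hω₀] at this
  have hMI : mutInfo μ X Xh = ∑ p : A × C, pr μ (fun ω => X ω = p.1 ∧ Xh ω = p.2) *
      Real.log (pr μ (fun ω => X ω = p.1 ∧ Xh ω = p.2) /
        (pr μ (fun ω => X ω = p.1) * pr μ (fun ω => Xh ω = p.2))) := by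
    rw [mutInfo]
    exact (Fintype.sum_prod_type (fun p : A × C =>
      pr μ (fun ω => X ω = p.1 ∧ Xh ω = p.2) *
        Real.log (pr μ (fun ω => X ω = p.1 ∧ Xh ω = p.2) /
          (pr μ (fun ω => X ω = p.1) * pr μ (fun ω => Xh ω = p.2))))).symm
  have hQ1lt : Q < 1 := lt_of_le_of_lt hQmax (by linarith)
  rcases eq_or_lt_of_le (le_trans hmin0 hQmin : (0:ℝ) ≤ Q) with hQ0 | hQpos
  · -- Q = 0 case
    have hpmin0 : pmin = 0 := le_antisymm (by linarith [hQmin, hQ0.symm.le]) hmin0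
    have hP0' : P = 0 := by
      rw [hPsum]
      refine Finset.sum_eq_zero fun p hp => ?_
      by_contra hne
      have hg := joint_ne_zero μ hμ0 X Xh hne
      have : ∀ q ∈ Finset.univ.filter (fun p : A × C => p ∈ R),
          0 ≤ pr μ (fun ω => X ω = q.1) * pr μ (fun ω => Xh ω = q.2) := fun q _ =>
        mul_nonneg (pr_nonneg μ hμ0 _) (pr_nonneg μ hμ0 _)
      have hQ0' : ∑ q ∈ Finset.univ.filter (fun p : A × C => p ∈ R),
          pr μ (fun ω => X ω = q.1) * pr μ (fun ω => Xh ω = q.2) = 0 := by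
        rw [← hQdef]; exact hQ0.symm
      exact hg ((Finset.sum_eq_zero_iff_of_nonneg this).1 hQ0' p hp)
    rw [hP0', hpmin0]
    simp only [zero_mul, sub_zero, Real.log_one, add_zero]
    have hbe : binEnt 0 = 0 := by simp [binEnt]
    rw [hbe, add_zero]
    exact mutInfo_nonneg μ ⟨hμ0, hμ1⟩ X Xh
  · -- main case
    have h1Q : 0 < 1 - Q := by linarith
    have key1 := logSum (Finset.univ.filter (fun p : A × C => p ∈ R))
      (fun p => pr μ (fun ω => X ω = p.1 ∧ Xh ω = p.2))
      (fun p => pr μ (fun ω => X ω = p.1) * pr μ (fun ω => Xh ω = p.2))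
      (fun p _ => pr_nonneg μ hμ0 _)
      (fun p _ => mul_nonneg (pr_nonneg μ hμ0 _) (pr_nonneg μ hμ0 _))
      (fun p _ h => joint_ne_zero μ hμ0 X Xh h)
    have key2 := logSum (Finset.univ.filter (fun p : A × C => ¬ p ∈ R))
      (fun p => pr μ (fun ω => X ω = p.1 ∧ Xh ω = p.2))
      (fun p => pr μ (fun ω => X ω = p.1) * pr μ (fun ω => Xh ω = p.2))
      (fun p _ => pr_nonneg μ hμ0 _)
      (fun p _ => mul_nonneg (pr_nonneg μ hμ0 _) (pr_nonneg μ hμ0 _))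
      (fun p _ h => joint_ne_zero μ hμ0 X Xh h)
    have hsplitj := Finset.sum_filter_add_sum_filter_not Finset.univ (fun p : A × C => p ∈ R)
      (fun p => pr μ (fun ω => X ω = p.1 ∧ Xh ω = p.2))
    have hsplitg := Finset.sum_filter_add_sum_filter_not Finset.univ (fun p : A × C => p ∈ R)
      (fun p => pr μ (fun ω => X ω = p.1) * pr μ (fun ω => Xh ω = p.2))
    have hsplitf := Finset.sum_filter_add_sum_filter_not Finset.univ (fun p : A × C => p ∈ R)
      (fun p => pr μ (fun ω => X ω = p.1 ∧ Xh ω = p.2) *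
        Real.log (pr μ (fun ω => X ω = p.1 ∧ Xh ω = p.2) /
          (pr μ (fun ω => X ω = p.1) * pr μ (fun ω => Xh ω = p.2))))
    rw [total_pair μ hμ1 X Xh] at hsplitj
    rw [total_pair_indep μ hμ1 X Xh] at hsplitg
    have hj2 : ∑ p ∈ Finset.univ.filter (fun p : A × C => ¬ p ∈ R),
        pr μ (fun ω => X ω = p.1 ∧ Xh ω = p.2) = 1 - P := by rw [hPsum]; linarith
    have hg2 : ∑ p ∈ Finset.univ.filter (fun p : A × C => ¬ p ∈ R),
        pr μ (fun ω => X ω = p.1) * pr μ (fun ω => Xh ω = p.2) = 1 - Q := by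
      rw [hQdef]; linarith
    rw [← hPsum, ← hQdef] at key1
    rw [hj2, hg2] at key2
    have hImain : P * Real.log (P / Q) + (1 - P) * Real.log ((1 - P) / (1 - Q)) ≤
        mutInfo μ X Xh := by
      rw [hMI, ← hsplitf]
      exact add_le_add key1 key2
    have e1 : P * Real.log (P / Q) = P * Real.log P - P * Real.log Q := by
      by_cases h : P = 0
      · simp [h]
      · rw [Real.log_div h (ne_of_gt hQpos)]; ring
    have e2 : (1 - P) * Real.log ((1 - P) / (1 - Q)) =
        (1 - P) * Real.log (1 - P) - (1 - P) * Real.log (1 - Q) := by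
      by_cases h : (1 : ℝ) - P = 0
      · simp [h]
      · rw [Real.log_div h (ne_of_gt h1Q)]; ring
    have hbe : binEnt P = -(P * Real.log P) - (1 - P) * Real.log (1 - P) := rfl
    have hLid : Real.log ((1 - pmin) / pmax) = Real.log (1 - pmin) - Real.log pmax :=
      Real.log_div (ne_of_gt h1min) (ne_of_gt hmax0)
    have hB : P * Real.log Q ≤ P * Real.log pmax :=
      mul_le_mul_of_nonneg_left (Real.log_le_log hQpos hQmax) hP0
    have hC : (1 - P) * Real.log (1 - Q) ≤ (1 - P) * Real.log (1 - pmin) :=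
      mul_le_mul_of_nonneg_left (Real.log_le_log h1Q (by linarith)) (by linarith)
    rw [e1, e2] at hImain
    rw [hLid, hbe]
    nlinarith [hImain, hB, hC]
end Fano

theorem fano_iid_samples {Ω A B C : Type*} [Fintype Ω] [Fintype A] [Fintype B] [Fintype C]
    [DecidableEq A] [DecidableEq B] [DecidableEq C]
    (n : ℕ) (hn : 0 < n)
    (μ : Ω → ℝ) (hμ : IsPMF μ) (X : Ω → A) (Y : Ω → (Fin n → B)) (Xh : Ω → C)
    (hMC : MarkovChain μ X Y Xh)
    -- conditionally independent coordinates given `X`: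
    (hindep : ∀ (a : A) (y : Fin n → B),
      pr μ (fun ω => X ω = a ∧ Y ω = y) * (pr μ (fun ω => X ω = a)) ^ (n - 1) =
        ∏ i : Fin n, pr μ (fun ω => X ω = a ∧ Y ω i = y i))
    -- conditionally identically distributed given `X`:
    (hid : ∀ (a : A) (i : Fin n) (b : B),
      pr μ (fun ω => X ω = a ∧ Y ω i = b) = pr μ (fun ω => X ω = a ∧ Y ω ⟨0, hn⟩ = b))
    (R : Finset (A × C))
    (pmin pmax : ℝ) (hmin0 : 0 ≤ pmin) (hmin1 : pmin < 1) (hmax0 : 0 < pmax) (hmax1 : pmax ≤ 1)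
    (hsum : pmin + pmax < 1)
    (hmin : ∀ ω₀ : Ω, pmin ≤ pr μ (fun ω => (X ω, Xh ω₀) ∈ R))
    (hmax : ∀ ω₀ : Ω, pr μ (fun ω => (X ω, Xh ω₀) ∈ R) ≤ pmax) :
    mutInfo μ X Y ≤ n * mutInfo μ X (fun ω => Y ω ⟨0, hn⟩) ∧
    pr μ (fun ω => (X ω, Xh ω) ∈ R) ≤
      (n * mutInfo μ X (fun ω => Y ω ⟨0, hn⟩) +
          binEnt (pr μ (fun ω => (X ω, Xh ω) ∈ R)) + Real.log (1 - pmin)) /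
        Real.log ((1 - pmin) / pmax) := by
  obtain ⟨hμ0, hμ1⟩ := hμ
  have hidI : ∀ i : Fin n, mutInfo μ X (fun ω => Y ω i) =
      mutInfo μ X (fun ω => Y ω ⟨0, hn⟩) := by
    intro i
    rw [mutInfo, mutInfo]
    refine Finset.sum_congr rfl fun a _ => Finset.sum_congr rfl fun b _ => ?_
    have hm : pr μ (fun ω => Y ω i = b) = pr μ (fun ω => Y ω ⟨0, hn⟩ = b) := by
      rw [← marg_left μ X (fun ω => Y ω i) b, ← marg_left μ X (fun ω => Y ω ⟨0, hn⟩) b]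
      exact Finset.sum_congr rfl fun a _ => hid a i b
    rw [hid a i b, hm]
  have hpart1 : mutInfo μ X Y ≤ (n : ℝ) * mutInfo μ X (fun ω => Y ω ⟨0, hn⟩) := by
    refine le_trans (part1 n hn μ ⟨hμ0, hμ1⟩ X Y hindep) (le_of_eq ?_)
    rw [Finset.sum_congr rfl fun i (_ : i ∈ Finset.univ) => hidI i, Finset.sum_const,
      Finset.card_univ, Fintype.card_fin, nsmul_eq_mul]
  have hdpi : mutInfo μ X Xh ≤ mutInfo μ X Y := by
    have h1 : mutInfo μ X Xh ≤ mutInfo μ X (fun ω => (Y ω, Xh ω)) :=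
      mutInfo_comp_le μ hμ0 X (fun ω => (Y ω, Xh ω)) Prod.snd
    have h2 : mutInfo μ X (fun ω => (Y ω, Xh ω)) = mutInfo μ X Y :=
      mutInfo_markov μ hμ0 X Y Xh hMC
    linarith
  have hL : 0 < Real.log ((1 - pmin) / pmax) := by
    apply Real.log_pos
    rw [lt_div_iff₀ hmax0]
    linarith
  refine ⟨hpart1, ?_⟩
  rw [le_div_iff₀ hL]
  calc pr μ (fun ω => (X ω, Xh ω) ∈ R) * Real.log ((1 - pmin) / pmax)
      ≤ mutInfo μ X Xh + binEnt (pr μ (fun ω => (X ω, Xh ω) ∈ R)) + Real.log (1 - pmin) :=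
        fano_core μ ⟨hμ0, hμ1⟩ X Xh R pmin pmax hmin0 hmax0 hsum hmin hmax
    _ ≤ (n : ℝ) * mutInfo μ X (fun ω => Y ω ⟨0, hn⟩) +
          binEnt (pr μ (fun ω => (X ω, Xh ω) ∈ R)) + Real.log (1 - pmin) := by
        have := le_trans hdpi hpart1
        linarith
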